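/- For every looped digraph G = (V,A), Σ_{K acceptable for G} (λ+2)^{|V|−deg₄(K)} 2^{deg₄(K)} (−1)^{a(K)} = Σ_{K super for G} (λ+2)^{|V|−deg₄(K)} 2^{deg₄(K)} (−1)^{a(K)}; in other words, J(G)|_{x_e=1} equals the same sum restricted to super acceptable objects. -/
import Mathlib


open Finset

/-! ### Permanents -/

/-- The permanent of a square matrix. -/
noncomputable def perm {ι R : Type*} [Fintype ι] [DecidableEq ι] [CommRing R]
    (M : Matrix ι ι R) : R :=
  ∑ σ : Equiv.Perm ι, ∏ i, M i (σ i)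

/-! ### Chord diagrams -/

/-- A chord diagram with `n` chords: a partition of `{1,…,2n}` into `n` two-element
subsets (chords), each recorded by its left endpoint `l i` and right endpoint `r i`,
with the chords numbered in increasing order of their left endpoints. -/
structure ChordDiagram (n : ℕ) where
  l : Fin n → Fin (2 * n)
  r : Fin n → Fin (2 * n)
  lr : ∀ i, l i < r i
  mono : StrictMono l
  cover : ∀ q : Fin (2 * n), ∃! i : Fin n, l i = q ∨ r i = q

namespace ChordDiagram

variable {n : ℕ}

/-- Chords `i` and `j` intersect. -/
abbrev Intersect (D : ChordDiagram n) (i j : Fin n) : Prop :=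
  (D.l i < D.l j ∧ D.l j < D.r i ∧ D.r i < D.r j) ∨
  (D.l j < D.l i ∧ D.l i < D.r j ∧ D.r j < D.r i)

/-- Chord `i` is completely contained in chord `j`. -/
abbrev Contained (D : ChordDiagram n) (i j : Fin n) : Prop :=
  D.l j < D.l i ∧ D.r i < D.r j

/-- The five colors `I, B⁺₀, B⁺₁, B⁻₀, B⁻₁` (`true` encodes subscript `1`). -/
inductive JCol where
  | I : JCol
  | Bp : Bool → JCol
  | Bm : Bool → JCol
  deriving DecidableEq, Fintype

/-- The contribution `δ` of a left endpoint of a chord with a given color. -/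
def lsign : JCol → ℤ
  | .Bp true => 1
  | .Bm true => -1
  | _ => 0

/-- `δ(q)` for a coloring `ρ` of the chords of `D`. -/
def delta (D : ChordDiagram n) (ρ : Fin n → JCol) (q : Fin (2 * n)) : ℤ :=
  ∑ v : Fin n, ((if D.l v = q then lsign (ρ v) else 0) +
                (if D.r v = q then - lsign (ρ v) else 0))

/-- `Σ_{q < p} δ(q)`. -/
def kOf (D : ChordDiagram n) (ρ : Fin n → JCol) (p : Fin (2 * n)) : ℤ :=
  ∑ q ∈ univ.filter (fun q => q < p), D.delta ρ q

/-- The weight `ω_ρ(v)` of chord `v` under the coloring `ρ`. -/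
noncomputable def omega (D : ChordDiagram n) (ρ : Fin n → JCol) (v : Fin n) :
    Polynomial ℚ :=
  match ρ v with
  | .I => Polynomial.X + 2
  | .Bp ε => - (-1 : Polynomial ℚ) ^ (if ε then 1 else 0) *
      (1 + ((D.kOf ρ (D.l v) : ℤ) : Polynomial ℚ)) *
      (Polynomial.X + 1 - ((D.kOf ρ (D.r v) : ℤ) : Polynomial ℚ))
  | .Bm ε => - (-1 : Polynomial ℚ) ^ (if ε then 1 else 0) *
      (1 + ((D.kOf ρ (D.r v) : ℤ) : Polynomial ℚ)) *
      (Polynomial.X + 1 - ((D.kOf ρ (D.l v) : ℤ) : Polynomial ℚ))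

/-- The colored Jones weight system `W_J(D) ∈ ℚ[λ]` (with `λ = X`). -/
noncomputable def WJ (D : ChordDiagram n) : Polynomial ℚ :=
  ∑ ρ : Fin n → JCol, ∏ v : Fin n, D.omega ρ v

/-- The intersection matrix `IM(D)` with entries `sign(i−j)` for intersecting chords. -/
def IM (D : ChordDiagram n) : Matrix (Fin n) (Fin n) ℚ := fun i j =>
  if D.Intersect i j then (if j < i then 1 else if i < j then -1 else 0) else 0

/-- The `3×3` block `A₀`. -/
noncomputable def A0 : Matrix (Fin 3) (Fin 3) (Polynomial ℚ) :=
  !![Polynomial.X + 2, 0, 0; 0, Polynomial.X + 2, 1; Polynomial.X, -Polynomial.X - 2, 1]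

/-- The `3×3` block `A₊`. -/
noncomputable def Aplus : Matrix (Fin 3) (Fin 3) (Polynomial ℚ) := !![1, 1, 0; 0, 0, 0; 0, 0, 0]

/-- The `3×3` block `A₋`. -/
noncomputable def Aminus : Matrix (Fin 3) (Fin 3) (Polynomial ℚ) := !![0, 0, 0; -1, -1, 0; 0, 0, 0]

/-- The `3×3` block `A_c`. -/
noncomputable def Acont : Matrix (Fin 3) (Fin 3) (Polynomial ℚ) := !![1, 1, 0; -1, -1, 0; 0, 0, 0]

/-- The blown-up intersection matrix `IM_J(D)`, a `3n×3n` matrix of `3×3` blocks. -/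
noncomputable def IMJ (D : ChordDiagram n) :
    Matrix (Fin n × Fin 3) (Fin n × Fin 3) (Polynomial ℚ) := fun p q =>
  (if p.1 = q.1 then A0
   else if q.1 < p.1 ∧ D.Intersect p.1 q.1 then Aplus
   else if p.1 < q.1 ∧ D.Intersect p.1 q.1 then Aminus
   else if ¬ D.Intersect p.1 q.1 ∧ D.Contained p.1 q.1 then Acont
   else 0) p.2 q.2

end ChordDiagram

/-! ### Looped digraphs -/

/-- A looped digraph: a finite digraph (arcs a set of ordered pairs) with a loop at
every vertex and a distinguished set of red non-loop arcs. -/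
structure LoopedDigraph (V : Type*) [Fintype V] [DecidableEq V] where
  arcs : Finset (V × V)
  red : Finset (V × V)
  loop_mem : ∀ v : V, (v, v) ∈ arcs
  red_sub : red ⊆ arcs
  red_no_loop : ∀ v : V, (v, v) ∉ red

/-- A thickened arc `(e, b)`, where `e` is an arc of the digraph and `b : Bool` records:
for an uncolored arc, whether it is thickened at its tail (`true`) or head (`false`);
for a red arc (always thickened at its tail `e.1`), whether it keeps its original
orientation (`true`) or is reversed (`false`). Loops always carry `b = true`. -/
abbrev TArc (V : Type*) := (V × V) × Bool

variable {V : Type*} [Fintype V] [DecidableEq V]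

/-- The degree of `v` in a collection `K` of thickened arcs: the number of arc-ends of
`K` at `v` (a loop contributing `2`). -/
def degAt (K : Finset (TArc V)) (v : V) : ℕ :=
  ∑ t ∈ K, ((if t.1.1 = v then 1 else 0) + (if t.1.2 = v then 1 else 0))

/-- `deg₄(K)`: the number of vertices of degree `4` in `K`. -/
def deg4 (K : Finset (TArc V)) : ℕ := (univ.filter fun v => degAt K v = 4).card

namespace LoopedDigraph

variable (G : LoopedDigraph V)

/-- The initial vertex of a thickened arc, as oriented in the collection. -/
def src (t : TArc V) : V := if t.1 ∈ G.red ∧ t.2 = false then t.1.2 else t.1.1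

/-- The terminal vertex of a thickened arc, as oriented in the collection. -/
def dst (t : TArc V) : V := if t.1 ∈ G.red ∧ t.2 = false then t.1.1 else t.1.2

/-- The vertex at which a thickened arc is thickened. -/
def tvert (t : TArc V) : V := if t.1 ∈ G.red then t.1.1 else if t.2 then t.1.1 else t.1.2

/-- The number of arcs of `K` thickened at `v`. -/
def thickAt (K : Finset (TArc V)) (v : V) : ℕ := (K.filter fun t => G.tvert t = v).card

/-- The number of arcs of `K` thickened at `v` that leave `v` (a loop counting as
leaving). -/
def outThickAt (K : Finset (TArc V)) (v : V) : ℕ :=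
  (K.filter fun t => G.tvert t = v ∧ G.src t = v).card

/-- An acceptable object for a looped digraph. -/
structure IsAcceptable (K : Finset (TArc V)) : Prop where
  mem_arcs : ∀ t ∈ K, t.1 ∈ G.arcs
  loop_thick : ∀ t ∈ K, t.1.1 = t.1.2 → t.2 = true
  deg024 : ∀ v, degAt K v = 0 ∨ degAt K v = 2 ∨ degAt K v = 4
  half_thick : ∀ v, 2 * G.thickAt K v = degAt K v
  balance : ∀ v, G.thickAt K v = 2 → G.outThickAt K v = 1

/-- `a(K)`: the number of arcs of `K` thickened at their initial vertex (loops count). -/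
def aK (K : Finset (TArc V)) : ℕ := (K.filter fun t => G.src t = G.tvert t).card

open Classical in
/-- The partition function `J(G)`, with `λ ↦ lam` and `x_e ↦ x e`. -/
noncomputable def J {R : Type*} [CommRing R] (lam : R) (x : V × V → R) : R :=
  ∑ K : Finset (TArc V),
    if G.IsAcceptable K then
      2 ^ deg4 K * (lam + 2) ^ (Fintype.card V - deg4 K) *
        (∏ t ∈ K, x t.1) * (-1 : R) ^ G.aK K
    else 0

/-- `s(w) = δ_w · ε_w` for a partial coloring `c` (with support the set `V′`). -/
def sInt (c : V → Option (Bool × Bool)) (w : V) : ℤ :=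
  match c w with
  | none => 0
  | some (δ, ε) => (if δ then 1 else -1) * (if ε then 1 else 0)

/-- `z_v(e)` (for `bar = false`) and `z̄_v(e)` (for `bar = true`). -/
def zfun {R : Type*} [CommRing R] (x : V × V → R) (c : V → Option (Bool × Bool))
    (bar : Bool) (v : V) (e : V × V) : R :=
  match c v with
  | none => 0
  | some (δ, _) =>
    if e ∈ G.red then
      (if e.1 = v then ((sInt c e.2 : ℤ) : R) * x e else 0)
    else if e.1 = v then (if δ = bar then ((sInt c e.2 : ℤ) : R) * x e else 0)
    else if e.2 = v then (if δ ≠ bar then ((sInt c e.1 : ℤ) : R) * x e else 0)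
    else 0

/-- The weight `ω′_c(v)`. -/
noncomputable def omegaC {R : Type*} [CommRing R] (lam : R) (x : V × V → R)
    (c : V → Option (Bool × Bool)) (v : V) : R :=
  match c v with
  | none => 0
  | some (_, ε) =>
    - (-1 : R) ^ (if ε then 1 else 0) *
      (1 + ∑ e ∈ G.arcs, G.zfun x c false v e) *
      (lam + 1 - ∑ e ∈ G.arcs, G.zfun x c true v e)

/-- The state sum `J′(G)`: the sum over `V′ ⊆ V` and colorings `c` of `V′` is encoded
as a sum over partial colorings `c : V → Option (Bool × Bool)` with support `V′`. -/
noncomputable def J' {R : Type*} [CommRing R] (lam : R) (x : V × V → R) : R :=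
  ∑ c : V → Option (Bool × Bool),
    (lam + 2) ^ (univ.filter fun v => c v = none).card *
      ∏ v ∈ univ.filter (fun v => (c v).isSome = true), G.omegaC lam x c v

end LoopedDigraph

/-! ### The labeled intersection digraph of a chord diagram -/

open ChordDiagram in
/-- The labeled intersection digraph `LID(D)` of a chord diagram `D`. -/
def LID {n : ℕ} (D : ChordDiagram n) : LoopedDigraph (Fin n) where
  arcs := univ.filter fun p : Fin n × Fin n =>
    p.1 = p.2 ∨ (p.1 < p.2 ∧ D.Intersect p.1 p.2) ∨ D.Contained p.1 p.2
  red := univ.filter fun p : Fin n × Fin n => D.Contained p.1 p.2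
  loop_mem := by intro v; simp
  red_sub := by intro p hp; simp only [mem_filter, mem_univ, true_and] at hp ⊢; tauto
  red_no_loop := by
    intro v hv
    simp only [mem_filter, mem_univ, true_and] at hv
    exact lt_irrefl _ hv.1

/-! ### The data `(V′, h)` and the state sum `A(V′, h)` -/

/-- The data of a function `h` assigning to every `v ∈ V′` a set of at most two arcs of
`G` incident with `v`, every red arc of `h v` leaving `v` (and `h v = ∅` off `V′`). -/
structure HData (G : LoopedDigraph V) (V' : Finset V) where
  h : V → Finset (V × V)
  sub : ∀ v, h v ⊆ G.arcs
  card_le : ∀ v, (h v).card ≤ 2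
  incident : ∀ v, ∀ e ∈ h v, e.1 = v ∨ e.2 = v
  red_out : ∀ v, ∀ e ∈ h v, e ∈ G.red → e.1 = v
  outside : ∀ v, v ∉ V' → h v = ∅

/-- The number of arc-ends at `v` among a set of thickened arcs `(e, w)`. -/
def endCountAt (S : Finset ((V × V) × V)) (v : V) : ℕ :=
  ∑ p ∈ S, ((if p.1.1 = v then 1 else 0) + (if p.1.2 = v then 1 else 0))

namespace HData

variable {G : LoopedDigraph V} {V' : Finset V} (H : HData G V')

/-- `W₁ = {v ∈ V′ : |h(v)| = 2}`. -/
def W1 : Finset V := V'.filter fun v => (H.h v).card = 2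

/-- `W₂ = {v ∈ V′ : |h(v)| ≥ 1}`. -/
def W2 : Finset V := V'.filter fun v => 1 ≤ (H.h v).card

/-- `h(W₂)`: the set of thickened arcs `(e, v)` with `v ∈ W₂` and `e ∈ h v`. -/
def hW2 : Finset ((V × V) × V) :=
  univ.filter fun p => p.2 ∈ H.W2 ∧ p.1 ∈ H.h p.2

/-- The functions `g` on `S` with `g v ∈ h v`, encoded as singleton-valued selections
`gs : V → Finset (V × V)` (with `gs v = ∅` off `S`). -/
def choices (S : Finset V) : Finset (V → Finset (V × V)) :=
  univ.filter fun gs => ∀ v, gs v ⊆ H.h v ∧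
    (v ∈ S → (gs v).card = 1) ∧ (v ∉ S → gs v = ∅)

/-- The summand `B(c, V₂′, g)`; here `g` is encoded by the selection `gs` on
`W₁ ∪ V₂′` and the complementary function `f` (on `W₁ ∪ V₁′`, `V₁′ = W₂∖(W₁∪V₂′)`)
is encoded by the complementary selection `h v ∖ gs v`. -/
noncomputable def Bterm {R : Type*} [CommRing R] (lam : R) (x : V × V → R)
    (c : V → Option (Bool × Bool)) (V2 : Finset V) (gs : V → Finset (V × V)) : R :=
  (-1 : R) ^ (∑ v ∈ V', ((c v).elim 0 fun p => if p.2 then 1 else 0 : ℕ)) *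
  (-1 : R) ^ (H.W1 ∪ V2).card *
  (lam + 1) ^ (V' \ (H.W1 ∪ V2)).card *
  (∏ v ∈ H.W1 ∪ V2, ∏ e ∈ gs v, G.zfun x c true v e) *
  (∏ v ∈ H.W1 ∪ (H.W2 \ (H.W1 ∪ V2)), ∏ e ∈ H.h v \ gs v, G.zfun x c false v e)

open Classical in
/-- The state sum `A(V′, h)`. -/
noncomputable def Aval {R : Type*} [CommRing R] (lam : R) (x : V × V → R) : R :=
  ∑ c : V → Option (Bool × Bool),
    if (∀ v, (c v).isSome = true ↔ v ∈ V') then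
      ∑ V2 ∈ (H.W2 \ H.W1).powerset, ∑ gs ∈ H.choices (H.W1 ∪ V2),
        H.Bterm lam x c V2 gs
    else 0

end HData

/-! ### Good collections and the state sum `C(X, V′, K)` -/

namespace LoopedDigraph

/-- A collection of thickened arcs good on `V′`. -/
structure IsGood (G : LoopedDigraph V) (V' : Finset V) (K : Finset (TArc V)) : Prop where
  mem_arcs : ∀ t ∈ K, t.1 ∈ G.arcs
  loop_thick : ∀ t ∈ K, t.1.1 = t.1.2 → t.2 = true
  red_orig : ∀ t ∈ K, t.1 ∈ G.red → t.2 = true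
  deg_mem : ∀ v ∈ V', degAt K v = 2 ∨ degAt K v = 4
  deg_out : ∀ v, v ∉ V' → degAt K v = 0
  half_thick : ∀ v, 2 * G.thickAt K v = degAt K v
  unc_opp : ∀ t ∈ K, ∀ s ∈ K, t ≠ s → t.1 ∉ G.red → s.1 ∉ G.red →
    G.tvert t = G.tvert s → ((G.src t = G.tvert t) ↔ ¬ (G.src s = G.tvert s))

/-- The set `W₁` of degree-4 vertices of a collection `K`. -/
def KW1 (G : LoopedDigraph V) (K : Finset (TArc V)) : Finset V :=
  univ.filter fun v => degAt K v = 4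

/-- The arcs of `K` thickened at `v`. -/
def thickedAt (G : LoopedDigraph V) (K : Finset (TArc V)) (v : V) : Finset (TArc V) :=
  K.filter fun t => G.tvert t = v

/-- The functions `g′` assigning to each degree-4 vertex one of the two arcs of `K`
thickened at it, encoded as singleton-valued selections. -/
def kchoices (G : LoopedDigraph V) (K : Finset (TArc V)) : Finset (V → Finset (TArc V)) :=
  univ.filter fun cs => ∀ v, cs v ⊆ G.thickedAt K v ∧
    (v ∈ KW1 G K → (cs v).card = 1) ∧ (v ∉ KW1 G K → cs v = ∅)

open Classical in
/-- The state sum `C(X, V′, K)`. -/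
noncomputable def Cval {R : Type*} [CommRing R] (G : LoopedDigraph V) (V' : Finset V)
    (K : Finset (TArc V)) (X : Finset V) (x : V × V → R) : R :=
  ∑ cs ∈ kchoices G K,
    (-1 : R) ^ (KW1 G K).card * (-1 : R) ^ X.card *
    ∑ c : V → Option (Bool × Bool),
      if (∀ v, (c v).isSome = true ↔ v ∈ V') then
        (∏ v ∈ KW1 G K ∪ X,
          ∏ t ∈ (if v ∈ KW1 G K then cs v else G.thickedAt K v), G.zfun x c true v t.1) *
        (∏ v ∈ V' \ X, ∏ t ∈ G.thickedAt K v \ cs v, G.zfun x c false v t.1)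
      else 0

/-- A connected acceptable object: one with no single loops. -/
def IsConnectedObj (G : LoopedDigraph V) (K : Finset (TArc V)) : Prop :=
  G.IsAcceptable K ∧ ∀ t ∈ K, t.1.1 = t.1.2 → degAt K t.1.1 ≠ 2

/-- A super acceptable object: connected, and every vertex has degree at least 2. -/
def IsSuper (G : LoopedDigraph V) (K : Finset (TArc V)) : Prop :=
  G.IsConnectedObj K ∧ ∀ v, 2 ≤ degAt K v

end LoopedDigraph



/-! ### Auxiliary material for the proof -/

namespace AccSuperAux

open LoopedDigraph

variable {V : Type*} [Fintype V] [DecidableEq V]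

/-- The loop thickened arc at `v`. -/
def lp (v : V) : TArc V := ((v, v), true)

lemma notMem_of_degAt_zero {K : Finset (TArc V)} {v : V} (h : degAt K v = 0)
    {t : TArc V} (ht : t ∈ K) : t.1.1 ≠ v ∧ t.1.2 ≠ v := by
  rw [degAt, Finset.sum_eq_zero_iff] at h
  have := h t ht
  constructor <;> intro hc <;> simp [hc] at this

lemma lp_notMem_of_degAt_zero {K : Finset (TArc V)} {v : V} (h : degAt K v = 0) :
    lp v ∉ K := fun hm => (notMem_of_degAt_zero h hm).1 rfl

lemma degAt_insert {K : Finset (TArc V)} {v : V} (h : lp v ∉ K) (w : V) :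
    degAt (insert (lp v) K) w = (if v = w then 2 else 0) + degAt K w := by
  rw [degAt, Finset.sum_insert h, degAt, lp]
  congr 1
  by_cases hw : v = w <;> simp [hw]

variable (G : LoopedDigraph V)

lemma tvert_lp (v : V) : G.tvert (lp v) = v := by
  simp [LoopedDigraph.tvert, lp, G.red_no_loop v]

lemma src_lp (v : V) : G.src (lp v) = v := by
  simp [LoopedDigraph.src, lp]

lemma thickAt_insert {K : Finset (TArc V)} {v : V} (h : lp v ∉ K) (w : V) :
    G.thickAt (insert (lp v) K) w = (if v = w then 1 else 0) + G.thickAt K w := by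
  rw [LoopedDigraph.thickAt, Finset.filter_insert, tvert_lp]
  by_cases hw : v = w
  · rw [if_pos hw, if_pos hw,
      Finset.card_insert_of_notMem (fun hc => h (Finset.mem_filter.1 hc).1)]
    rw [LoopedDigraph.thickAt]
    omega
  · rw [if_neg hw, if_neg hw, zero_add, LoopedDigraph.thickAt]

lemma outThickAt_insert {K : Finset (TArc V)} {v : V} (h : lp v ∉ K) (w : V) :
    G.outThickAt (insert (lp v) K) w = (if v = w then 1 else 0) + G.outThickAt K w := by
  rw [LoopedDigraph.outThickAt, Finset.filter_insert, tvert_lp, src_lp]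
  by_cases hw : v = w
  · rw [if_pos (by simp [hw]), if_pos hw,
      Finset.card_insert_of_notMem (fun hc => h (Finset.mem_filter.1 hc).1)]
    rw [LoopedDigraph.outThickAt]
    omega
  · rw [if_neg (by simp [hw]), if_neg hw, zero_add, LoopedDigraph.outThickAt]

lemma aK_insert {K : Finset (TArc V)} {v : V} (h : lp v ∉ K) :
    G.aK (insert (lp v) K) = G.aK K + 1 := by
  rw [LoopedDigraph.aK, Finset.filter_insert, if_pos (by rw [tvert_lp, src_lp]),
    Finset.card_insert_of_notMem (fun hc => h (Finset.mem_filter.1 hc).1),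
    LoopedDigraph.aK]

lemma deg4_insert {K : Finset (TArc V)} {v : V} (h : lp v ∉ K) (hv : degAt K v = 0) :
    deg4 (insert (lp v) K) = deg4 K := by
  unfold deg4
  congr 1
  apply Finset.filter_congr
  intro w _
  rw [degAt_insert h w]
  by_cases hw : v = w
  · subst hw; simp [hv]
  · simp [hw]

lemma acc_insert_iff {K : Finset (TArc V)} {v : V} (h : lp v ∉ K) (hv : degAt K v = 0) :
    G.IsAcceptable (insert (lp v) K) ↔ G.IsAcceptable K := by
  constructor
  · intro A
    have hthick0 : G.thickAt K v = 0 := by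
      have := A.half_thick v
      rw [degAt_insert h v, thickAt_insert G h v, if_pos rfl, if_pos rfl, hv] at this
      omega
    refine ⟨fun t ht => A.mem_arcs t (Finset.mem_insert_of_mem ht),
      fun t ht => A.loop_thick t (Finset.mem_insert_of_mem ht), ?_, ?_, ?_⟩
    · intro w
      have := A.deg024 w
      rw [degAt_insert h w] at this
      by_cases hw : v = w
      · rw [if_pos hw] at this; omega
      · rw [if_neg hw, zero_add] at this; exact this
    · intro w
      have := A.half_thick w
      rw [degAt_insert h w, thickAt_insert G h w] at this
      by_cases hw : v = w
      · rw [if_pos hw, if_pos hw] at this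
        have hww : degAt K w = 0 := hw ▸ hv
        have htt : G.thickAt K w = 0 := hw ▸ hthick0
        rw [hww, htt]
      · rw [if_neg hw, if_neg hw, zero_add, zero_add] at this; exact this
    · intro w hw2
      by_cases hw : v = w
      · have htt : G.thickAt K w = 0 := hw ▸ hthick0
        rw [htt] at hw2
        omega
      · have h2 : G.thickAt (insert (lp v) K) w = 2 := by
          rw [thickAt_insert G h w, if_neg hw, zero_add]; exact hw2
        have := A.balance w h2
        rw [outThickAt_insert G h w, if_neg hw, zero_add] at this
        exact this
  · intro A
    have hthick0 : G.thickAt K v = 0 := by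
      have := A.half_thick v; omega
    refine ⟨?_, ?_, ?_, ?_, ?_⟩
    · intro t ht
      rcases Finset.mem_insert.1 ht with rfl | ht
      · exact G.loop_mem v
      · exact A.mem_arcs t ht
    · intro t ht
      rcases Finset.mem_insert.1 ht with rfl | ht
      · intro _; rfl
      · exact A.loop_thick t ht
    · intro w
      have := A.deg024 w
      rw [degAt_insert h w]
      by_cases hw : v = w
      · have hww : degAt K w = 0 := hw ▸ hv
        rw [if_pos hw, hww]
        norm_num
      · rw [if_neg hw, zero_add]; exact this
    · intro w
      have := A.half_thick w
      rw [degAt_insert h w, thickAt_insert G h w]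
      by_cases hw : v = w
      · rw [if_pos hw, if_pos hw]
        have hww : degAt K w = 0 := hw ▸ hv
        have htt : G.thickAt K w = 0 := hw ▸ hthick0
        rw [hww, htt]
      · rw [if_neg hw, if_neg hw, zero_add, zero_add]; exact this
    · intro w hw2
      rw [thickAt_insert G h w] at hw2
      rw [outThickAt_insert G h w]
      by_cases hw : v = w
      · rw [if_pos hw] at hw2
        have htt : G.thickAt K w = 0 := hw ▸ hthick0
        rw [htt] at hw2
        omega
      · rw [if_neg hw, zero_add] at hw2
        rw [if_neg hw, zero_add]
        exact A.balance w hw2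

/-- The set of "bad" vertices of a collection: degree `0`, or a single loop. -/
def bad (K : Finset (TArc V)) : Finset V :=
  univ.filter fun v => degAt K v = 0 ∨ (lp v ∈ K ∧ degAt K v = 2)

lemma bad_insert {K : Finset (TArc V)} {v : V} (h : lp v ∉ K) (hv : degAt K v = 0) :
    bad (insert (lp v) K) = bad K := by
  unfold bad
  apply Finset.filter_congr
  intro w _
  rw [degAt_insert h w]
  by_cases hw : v = w
  · subst hw
    simp [hv, Finset.mem_insert]
  · have hne : lp w ≠ lp v := fun hc => hw (congrArg (fun t : TArc V => t.1.1) hc).symm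
    simp [hw, Finset.mem_insert, hne]

lemma bad_nonempty_of_not_super {K : Finset (TArc V)} (hA : G.IsAcceptable K)
    (hS : ¬ G.IsSuper K) : (bad (V := V) K).Nonempty := by
  rw [LoopedDigraph.IsSuper, not_and_or] at hS
  rcases hS with hC | hd
  · rw [LoopedDigraph.IsConnectedObj, not_and_or] at hC
    rcases hC with hC | hC
    · exact absurd hA hC
    · push_neg at hC
      obtain ⟨t, htK, hloop, hdeg⟩ := hC
      have hb : t.2 = true := hA.loop_thick t htK hloop
      have htlp : t = lp t.1.1 := by
        rcases t with ⟨⟨a, b⟩, c⟩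
        simp only at hloop hb
        rw [lp]
        subst hloop hb
        rfl
      exact ⟨t.1.1, Finset.mem_filter.2 ⟨Finset.mem_univ _, Or.inr ⟨htlp ▸ htK, hdeg⟩⟩⟩
  · push_neg at hd
    obtain ⟨w, hw⟩ := hd
    have := hA.deg024 w
    exact ⟨w, Finset.mem_filter.2 ⟨Finset.mem_univ _, Or.inl (by omega)⟩⟩

lemma not_super_of_bad {K : Finset (TArc V)} (hne : (bad (V := V) K).Nonempty) :
    ¬ G.IsSuper K := by
  obtain ⟨v, hv⟩ := hne
  rw [bad, Finset.mem_filter] at hv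
  rcases hv.2 with h0 | ⟨hm, h2⟩
  · intro hS
    have := hS.2 v
    omega
  · intro hS
    exact hS.1.2 (lp v) hm rfl h2

section LO

variable [LinearOrder V]

/-- The toggling involution: add or remove a single loop at the least bad vertex. -/
def tog (K : Finset (TArc V)) : Finset (TArc V) :=
  Option.elim ((bad (V := V) K).min) K
    (fun v => if lp v ∈ K then K.erase (lp v) else insert (lp v) K)

lemma tog_eq {K : Finset (TArc V)} {v : V} (hv : (bad (V := V) K).min = some v) :
    tog K = if lp v ∈ K then K.erase (lp v) else insert (lp v) K := by
  unfold tog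
  rw [hv]
  rfl

lemma tog_spec {K : Finset (TArc V)} (hA : G.IsAcceptable K) {v : V}
    (hv : (bad (V := V) K).min = some v) :
    G.IsAcceptable (tog K) ∧ bad (V := V) (tog K) = bad (V := V) K ∧ tog K ≠ K ∧
      tog (tog K) = K ∧ deg4 (tog K) = deg4 K ∧
      (G.aK (tog K) = G.aK K + 1 ∨ G.aK K = G.aK (tog K) + 1) := by
  have hvb : v ∈ bad (V := V) K := Finset.mem_of_min hv
  rw [bad, Finset.mem_filter] at hvb
  have htog := tog_eq (V := V) hv
  by_cases hlp : lp v ∈ K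
  · rw [if_pos hlp] at htog
    have hnm : lp v ∉ K.erase (lp v) := Finset.notMem_erase _ _
    have hins : insert (lp v) (K.erase (lp v)) = K := Finset.insert_erase hlp
    have hdeg2 : degAt K v = 2 := by
      rcases hvb.2 with h0 | ⟨_, h2⟩
      · exact absurd hlp (lp_notMem_of_degAt_zero h0)
      · exact h2
    have hdeg0 : degAt (K.erase (lp v)) v = 0 := by
      have hd := degAt_insert hnm v
      rw [hins, if_pos rfl, hdeg2] at hd
      omega
    have hacc0 : G.IsAcceptable (K.erase (lp v)) :=
      (acc_insert_iff G hnm hdeg0).1 (by rw [hins]; exact hA)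
    have hbadeq : bad (V := V) (K.erase (lp v)) = bad (V := V) K := by
      have hb := bad_insert hnm hdeg0
      rw [hins] at hb
      exact hb.symm
    refine ⟨htog ▸ hacc0, by rw [htog]; exact hbadeq, ?_, ?_, ?_, ?_⟩
    · rw [htog]
      intro hcontra
      rw [hcontra] at hnm
      exact hnm hlp
    · rw [htog]
      have hv0 : (bad (V := V) (K.erase (lp v))).min = some v := by rw [hbadeq]; exact hv
      rw [tog_eq hv0, if_neg hnm, hins]
    · rw [htog]
      have hd4 := deg4_insert hnm hdeg0
      rw [hins] at hd4
      exact hd4.symm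
    · right
      rw [htog]
      have ha := aK_insert G hnm
      rw [hins] at ha
      exact ha
  · rw [if_neg hlp] at htog
    have hdeg0 : degAt K v = 0 := by
      rcases hvb.2 with h0 | ⟨h1, _⟩
      · exact h0
      · exact absurd h1 hlp
    refine ⟨htog ▸ (acc_insert_iff G hlp hdeg0).2 hA,
      by rw [htog]; exact bad_insert hlp hdeg0, ?_, ?_,
      by rw [htog]; exact deg4_insert hlp hdeg0,
      Or.inl (by rw [htog]; exact aK_insert G hlp)⟩
    · rw [htog]
      intro hcontra
      exact hlp (hcontra ▸ Finset.mem_insert_self _ _)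
    · rw [htog]
      have hv0 : (bad (V := V) (insert (lp v) K)).min = some v := by
        rw [bad_insert hlp hdeg0]; exact hv
      rw [tog_eq hv0, if_pos (Finset.mem_insert_self _ _), Finset.erase_insert hlp]

end LO

end AccSuperAux

open Classical in
/-- The sum defining `J(G)|_{x_e=1}` over acceptable objects equals the same sum
restricted to super acceptable objects. -/
theorem acceptable_sum_eq_super_sum {V : Type*} [Fintype V] [DecidableEq V]
    (G : LoopedDigraph V) :
    (∑ K : Finset (TArc V),
      if G.IsAcceptable K then
        (Polynomial.X + 2 : Polynomial ℚ) ^ (Fintype.card V - deg4 K) *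
          2 ^ deg4 K * (-1 : Polynomial ℚ) ^ G.aK K
      else 0) =
    (∑ K : Finset (TArc V),
      if G.IsSuper K then
        (Polynomial.X + 2 : Polynomial ℚ) ^ (Fintype.card V - deg4 K) *
          2 ^ deg4 K * (-1 : Polynomial ℚ) ^ G.aK K
      else 0) := by
  classical
  letI : LinearOrder V := LinearOrder.lift' (Fintype.equivFin V) (Fintype.equivFin V).injective
  set T : Finset (TArc V) → Polynomial ℚ := fun K =>
    (Polynomial.X + 2 : Polynomial ℚ) ^ (Fintype.card V - deg4 K) *
      2 ^ deg4 K * (-1 : Polynomial ℚ) ^ G.aK K with hT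
  have key : ∀ K : Finset (TArc V),
      (if G.IsAcceptable K then T K else 0) =
      (if G.IsSuper K then T K else 0) +
      (if G.IsAcceptable K ∧ ¬ G.IsSuper K then T K else 0) := by
    intro K
    by_cases h1 : G.IsSuper K
    · have h2 : G.IsAcceptable K := h1.1.1
      simp [h1, h2]
    · by_cases h2 : G.IsAcceptable K <;> simp [h1, h2]
  calc (∑ K : Finset (TArc V), if G.IsAcceptable K then T K else 0)
      = ∑ K : Finset (TArc V), ((if G.IsSuper K then T K else 0) +
        (if G.IsAcceptable K ∧ ¬ G.IsSuper K then T K else 0)) :=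
        Finset.sum_congr rfl fun K _ => key K
    _ = (∑ K : Finset (TArc V), if G.IsSuper K then T K else 0) +
        ∑ K : Finset (TArc V), (if G.IsAcceptable K ∧ ¬ G.IsSuper K then T K else 0) :=
        Finset.sum_add_distrib
    _ = ∑ K : Finset (TArc V), if G.IsSuper K then T K else 0 := by
        rw [add_eq_left, ← Finset.sum_filter]
        set s := Finset.univ.filter
          (fun K : Finset (TArc V) => G.IsAcceptable K ∧ ¬ G.IsSuper K) with hs
        have hmem : ∀ K ∈ s, G.IsAcceptable K ∧ ¬ G.IsSuper K := by
          intro K hK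
          exact (Finset.mem_filter.1 hK).2
        have hminK : ∀ K ∈ s, ∃ v : V, (AccSuperAux.bad (V := V) K).min = some v := by
          intro K hK
          obtain ⟨w, hw⟩ :=
            AccSuperAux.bad_nonempty_of_not_super G (hmem K hK).1 (hmem K hK).2
          obtain ⟨b, hb⟩ := Finset.min_of_mem hw
          exact ⟨b, hb⟩
        refine Finset.sum_involution (fun K _ => AccSuperAux.tog K) ?_ ?_ ?_ ?_
        · intro K hK
          obtain ⟨v, hv⟩ := hminK K hK
          obtain ⟨_, _, _, _, hd4, haK⟩ := AccSuperAux.tog_spec G (hmem K hK).1 hv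
          have hsign : ((-1 : Polynomial ℚ) ^ G.aK (AccSuperAux.tog K)) =
              -((-1 : Polynomial ℚ) ^ G.aK K) := by
            rcases haK with h | h
            · rw [h, pow_succ]; ring
            · rw [h, pow_succ]; ring
          simp only [hT]
          rw [hd4, hsign]
          ring
        · intro K hK _
          obtain ⟨v, hv⟩ := hminK K hK
          exact (AccSuperAux.tog_spec G (hmem K hK).1 hv).2.2.1
        · intro K hK
          obtain ⟨v, hv⟩ := hminK K hK
          obtain ⟨hacc, hbad, _, _, _, _⟩ := AccSuperAux.tog_spec G (hmem K hK).1 hv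
          show AccSuperAux.tog K ∈ s
          rw [hs, Finset.mem_filter]
          refine ⟨Finset.mem_univ _, hacc, AccSuperAux.not_super_of_bad G ?_⟩
          rw [hbad]
          exact AccSuperAux.bad_nonempty_of_not_super G (hmem K hK).1 (hmem K hK).2
        · intro K hK
          obtain ⟨v, hv⟩ := hminK K hK
          exact (AccSuperAux.tog_spec G (hmem K hK).1 hv).2.2.2.1
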